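/- Let F be a field, I a set of cardinality strictly larger than that of F and of every set in a fixed Grothendieck universe U containing F, and Λ = F⟨I⟩ the free algebra on I. Let A be the category of Λ-modules M admitting a submodule M' such that M' and M/M' are finite direct sums of copies of the trivial module F. Then A is an abelian category. -/

import Mathlib

open CategoryTheory Opposite
open scoped ModuleCat

universe u v

namespace PaperStmt

variable (F : Type u) [Field F] (I : Type v)

/-- The free (noncommutative polynomial) algebra `Λ = F⟨I⟩` on the set `I`. -/
abbrev Lam := FreeAlgebra F I

/-- The augmentation `Λ →ₐ F` sending every generator to `0`. -/
noncomputable def aug : Lam F I →ₐ[F] F := FreeAlgebra.lift F 0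

/-- The carrier of the trivial `Λ`-module `F`. -/
def Triv (F : Type u) (I : Type v) : Type max u v := ULift.{v} F

instance : AddCommGroup (Triv F I) := by unfold Triv; infer_instance

instance : Module F (Triv F I) := by unfold Triv; infer_instance

/-- The trivial `Λ`-module structure on `F`: each generator acts by zero. -/
noncomputable instance : Module (Lam F I) (Triv F I) :=
  Module.compHom (Triv F I) (aug F I).toRingHom

/-- The trivial `Λ`-module `F` as an object of the category of `Λ`-modules. -/
noncomputable def trivMod : ModuleCat.{max u v} (Lam F I) :=
  ModuleCat.of (Lam F I) (Triv F I)

/-- A `Λ`-module is a finite direct sum of copies of the trivial module `F` if it is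
`Λ`-linearly equivalent to `Fin n → F` (with trivial action) for some `n`. -/
noncomputable def IsFinSumTriv (M : Type w) [AddCommGroup M]
    [Module (Lam F I) M] : Prop :=
  ∃ n : ℕ, Nonempty (M ≃ₗ[Lam F I] (Fin n → Triv F I))

/-- The objects of the category `A`: the `Λ`-modules `M` admitting a submodule `M'`
such that `M'` and `M/M'` are finite direct sums of copies of the trivial
module `F`. -/
noncomputable def extP : ModuleCat.{max u v} (Lam F I) → Prop :=
  fun M => ∃ M' : Submodule (Lam F I) M,
    IsFinSumTriv F I M' ∧ IsFinSumTriv F I (M ⧸ M')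

/-- The category `A`, as a full subcategory of the category of `Λ`-modules. -/
noncomputable def CatA := ObjectProperty.FullSubcategory (extP F I)

noncomputable instance : Category (CatA F I) := ObjectProperty.FullSubcategory.category _

/-! ### Auxiliary development -/

open CategoryTheory.Limits

theorem aug_algebraMap (c : F) : aug F I (algebraMap F (Lam F I) c) = c :=
  (aug F I).commutes c

theorem smul_trivN {n : ℕ} (r : Lam F I) (x : Fin n → Triv F I) :
    r • x = aug F I r • x := rfl

/-- Upgrade an `F`-linear equivalence to a `Λ`-linear one, when on both sides the
`Λ`-action factors through the augmentation. -/
noncomputable def upgrade {A : Type*} {B : Type*} [AddCommGroup A] [AddCommGroup B]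
    [Module (Lam F I) A] [Module (Lam F I) B] [Module F A] [Module F B]
    (hA : ∀ (r : Lam F I) (a : A), r • a = aug F I r • a)
    (hB : ∀ (r : Lam F I) (b : B), r • b = aug F I r • b)
    (e : A ≃ₗ[F] B) : A ≃ₗ[Lam F I] B :=
  { e.toAddEquiv with
    map_smul' := fun r a => by
      show e (r • a) = r • e a
      rw [hA, hB, map_smul] }

/-- The restricted `F`-module structure on a `Λ`-module. -/
noncomputable def modF (M : Type w) [AddCommGroup M] [Module (Lam F I) M] : Module F M :=
  Module.compHom M ((algebraMap F (Lam F I)) : F →+* Lam F I)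

theorem isFinSumTriv_submodule_trivN (n : ℕ)
    (N : Submodule (Lam F I) (Fin n → Triv F I)) : IsFinSumTriv F I N := by
  letI : Module F N := modF F I ↥N
  have hN : ∀ (r : Lam F I) (a : N), r • a = aug F I r • a := by
    intro r a
    apply Subtype.ext
    show r • (a : Fin n → Triv F I) = algebraMap F (Lam F I) (aug F I r) • (a : Fin n → Triv F I)
    rw [smul_trivN, smul_trivN, aug_algebraMap]
  let f : N →ₗ[F] (Fin n → Triv F I) :=
    { toFun := fun a => (a : Fin n → Triv F I)
      map_add' := fun _ _ => rfl
      map_smul' := fun c a => by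
        show algebraMap F (Lam F I) c • (a : Fin n → Triv F I) = c • (a : Fin n → Triv F I)
        rw [smul_trivN, aug_algebraMap] }
  haveI : FiniteDimensional F (Triv F I) :=
    Module.Finite.equiv ((ULift.moduleEquiv : ULift.{v} F ≃ₗ[F] F).symm :
      F ≃ₗ[F] Triv F I)
  haveI : FiniteDimensional F N :=
    FiniteDimensional.of_injective f Subtype.coe_injective
  exact ⟨Module.finrank F N, ⟨upgrade F I hN (smul_trivN F I)
    ((Module.finBasis F N).equivFun.trans
      (LinearEquiv.piCongrRight fun _ =>
        ((ULift.moduleEquiv : ULift.{v} F ≃ₗ[F] F).symm : F ≃ₗ[F] Triv F I)))⟩⟩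

theorem isFinSumTriv_quotient_trivN (n : ℕ)
    (N : Submodule (Lam F I) (Fin n → Triv F I)) :
    IsFinSumTriv F I ((Fin n → Triv F I) ⧸ N) := by
  letI : Module F ((Fin n → Triv F I) ⧸ N) := modF F I _
  have hQ : ∀ (r : Lam F I) (a : (Fin n → Triv F I) ⧸ N), r • a = aug F I r • a := by
    intro r a
    obtain ⟨x, rfl⟩ := Submodule.Quotient.mk_surjective N a
    show r • Submodule.Quotient.mk (p := N) x
        = algebraMap F (Lam F I) (aug F I r) • Submodule.Quotient.mk (p := N) x
    rw [← Submodule.Quotient.mk_smul, ← Submodule.Quotient.mk_smul]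
    congr 1
    rw [smul_trivN, smul_trivN, aug_algebraMap]
  let g : (Fin n → Triv F I) →ₗ[F] ((Fin n → Triv F I) ⧸ N) :=
    { toFun := fun x => Submodule.Quotient.mk x
      map_add' := fun _ _ => rfl
      map_smul' := fun c x => by
        show Submodule.Quotient.mk (p := N) (c • x)
            = algebraMap F (Lam F I) c • Submodule.Quotient.mk (p := N) x
        rw [← Submodule.Quotient.mk_smul]
        congr 1
        rw [smul_trivN, aug_algebraMap] }
  haveI : FiniteDimensional F (Triv F I) :=
    Module.Finite.equiv ((ULift.moduleEquiv : ULift.{v} F ≃ₗ[F] F).symm :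
      F ≃ₗ[F] Triv F I)
  haveI : FiniteDimensional F ((Fin n → Triv F I) ⧸ N) :=
    Module.Finite.of_surjective g (Submodule.Quotient.mk_surjective N)
  exact ⟨Module.finrank F ((Fin n → Triv F I) ⧸ N), ⟨upgrade F I hQ (smul_trivN F I)
    ((Module.finBasis F _).equivFun.trans
      (LinearEquiv.piCongrRight fun _ =>
        ((ULift.moduleEquiv : ULift.{v} F ≃ₗ[F] F).symm : F ≃ₗ[F] Triv F I)))⟩⟩

theorem isFinSumTriv_congr {A : Type*} {B : Type*} [AddCommGroup A] [AddCommGroup B]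
    [Module (Lam F I) A] [Module (Lam F I) B] (e : A ≃ₗ[Lam F I] B)
    (h : IsFinSumTriv F I A) : IsFinSumTriv F I B := by
  obtain ⟨k, ⟨e2⟩⟩ := h
  exact ⟨k, ⟨e.symm.trans e2⟩⟩

theorem isFinSumTriv_submodule {M : Type*} [AddCommGroup M] [Module (Lam F I) M]
    (h : IsFinSumTriv F I M) (N : Submodule (Lam F I) M) : IsFinSumTriv F I N := by
  obtain ⟨n, ⟨e⟩⟩ := h
  exact isFinSumTriv_congr F I (e.submoduleMap N).symm
    (isFinSumTriv_submodule_trivN F I n (N.map (e : M →ₗ[Lam F I] (Fin n → Triv F I))))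

theorem isFinSumTriv_quotient {M : Type*} [AddCommGroup M] [Module (Lam F I) M]
    (h : IsFinSumTriv F I M) (N : Submodule (Lam F I) M) : IsFinSumTriv F I (M ⧸ N) := by
  obtain ⟨n, ⟨e⟩⟩ := h
  exact isFinSumTriv_congr F I (Submodule.Quotient.equiv N (N.map (e : M →ₗ[Lam F I] (Fin n → Triv F I))) e rfl).symm
    (isFinSumTriv_quotient_trivN F I n (N.map (e : M →ₗ[Lam F I] (Fin n → Triv F I))))

theorem isFinSumTriv_of_injective {A : Type*} {B : Type*} [AddCommGroup A] [AddCommGroup B]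
    [Module (Lam F I) A] [Module (Lam F I) B] (h : IsFinSumTriv F I B)
    (f : A →ₗ[Lam F I] B) (hf : Function.Injective f) : IsFinSumTriv F I A :=
  isFinSumTriv_congr F I (LinearEquiv.ofInjective f hf).symm
    (isFinSumTriv_submodule F I h (LinearMap.range f))

theorem isFinSumTriv_of_surjective {A : Type*} {B : Type*} [AddCommGroup A] [AddCommGroup B]
    [Module (Lam F I) A] [Module (Lam F I) B] (h : IsFinSumTriv F I A)
    (f : A →ₗ[Lam F I] B) (hf : Function.Surjective f) : IsFinSumTriv F I B :=
  isFinSumTriv_congr F I (f.quotKerEquivOfSurjective hf)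
    (isFinSumTriv_quotient F I h (LinearMap.ker f))

/-- `(Fin m → T) × (Fin k → T) ≃ₗ Fin (m+k) → T`. -/
noncomputable def trivNProdEquiv (m k : ℕ) :
    ((Fin m → Triv F I) × (Fin k → Triv F I)) ≃ₗ[Lam F I] (Fin (m + k) → Triv F I) :=
  ((LinearEquiv.sumArrowLequivProdArrow (Fin m) (Fin k) (Lam F I) (Triv F I)).symm).trans
    (LinearEquiv.funCongrLeft (Lam F I) (Triv F I) finSumFinEquiv.symm)

theorem isFinSumTriv_prod {A : Type*} {B : Type*} [AddCommGroup A] [AddCommGroup B]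
    [Module (Lam F I) A] [Module (Lam F I) B] (hA : IsFinSumTriv F I A)
    (hB : IsFinSumTriv F I B) : IsFinSumTriv F I (A × B) := by
  obtain ⟨m, ⟨e1⟩⟩ := hA
  obtain ⟨k, ⟨e2⟩⟩ := hB
  exact ⟨m + k, ⟨(e1.prodCongr e2).trans (trivNProdEquiv F I m k)⟩⟩

theorem isFinSumTriv_of_subsingleton {A : Type*} [AddCommGroup A] [Module (Lam F I) A]
    (h : Subsingleton A) : IsFinSumTriv F I A :=
  haveI := h
  ⟨0, ⟨LinearEquiv.ofLinear 0 0
    (LinearMap.ext fun x => funext fun i => i.elim0)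
    (LinearMap.ext fun x => Subsingleton.elim _ _)⟩⟩

/-! ### Closure properties of `extP` -/

theorem extP_of_injective {M N : ModuleCat.{max u v} (Lam F I)} (h : extP F I M)
    (f : ↑N →ₗ[Lam F I] ↑M) (hf : Function.Injective f) : extP F I N := by
  obtain ⟨M', h1, h2⟩ := h
  refine ⟨M'.comap f, ?_, ?_⟩
  · refine isFinSumTriv_of_injective F I h1 (f.restrict fun x hx => hx) ?_
    intro a b hab
    exact Subtype.ext (hf (congrArg Subtype.val hab))
  · refine isFinSumTriv_of_injective F I h2 (Submodule.mapQ (M'.comap f) M' f le_rfl) ?_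
    intro a b hab
    obtain ⟨x, rfl⟩ := Submodule.Quotient.mk_surjective _ a
    obtain ⟨y, rfl⟩ := Submodule.Quotient.mk_surjective _ b
    rw [Submodule.mapQ_apply, Submodule.mapQ_apply, Submodule.Quotient.eq] at hab
    rw [Submodule.Quotient.eq]
    rw [Submodule.mem_comap, map_sub]
    exact hab

theorem extP_of_surjective {M N : ModuleCat.{max u v} (Lam F I)} (h : extP F I M)
    (f : ↑M →ₗ[Lam F I] ↑N) (hf : Function.Surjective f) : extP F I N := by
  obtain ⟨M', h1, h2⟩ := h
  refine ⟨M'.map f, ?_, ?_⟩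
  · exact isFinSumTriv_of_surjective F I h1 (f.submoduleMap M')
      (LinearMap.submoduleMap_surjective f M')
  · refine isFinSumTriv_of_surjective F I h2
      (Submodule.mapQ M' (M'.map f) f (Submodule.le_comap_map f M')) ?_
    intro q
    obtain ⟨y, rfl⟩ := Submodule.Quotient.mk_surjective _ q
    obtain ⟨x, rfl⟩ := hf y
    exact ⟨Submodule.Quotient.mk x, by rw [Submodule.mapQ_apply]⟩

/-- `↥(p.prod q) ≃ₗ ↥p × ↥q`. -/
noncomputable def submoduleProdEquiv {A : Type*} {B : Type*} [AddCommGroup A] [AddCommGroup B]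
    [Module (Lam F I) A] [Module (Lam F I) B] (p : Submodule (Lam F I) A)
    (q : Submodule (Lam F I) B) : ↥(p.prod q) ≃ₗ[Lam F I] ↥p × ↥q where
  toFun x := (⟨x.val.1, x.2.1⟩, ⟨x.val.2, x.2.2⟩)
  invFun y := ⟨(y.1.val, y.2.val), y.1.2, y.2.2⟩
  map_add' _ _ := rfl
  map_smul' _ _ := rfl
  left_inv _ := rfl
  right_inv _ := rfl

/-- `(A × B) ⧸ (p.prod q) ≃ₗ (A ⧸ p) × (B ⧸ q)`. -/
noncomputable def prodQuotEquiv {A : Type*} {B : Type*} [AddCommGroup A] [AddCommGroup B]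
    [Module (Lam F I) A] [Module (Lam F I) B] (p : Submodule (Lam F I) A)
    (q : Submodule (Lam F I) B) :
    ((A × B) ⧸ (p.prod q)) ≃ₗ[Lam F I] (A ⧸ p) × (B ⧸ q) := by
  refine LinearEquiv.ofBijective
    (Submodule.liftQ (p.prod q) (p.mkQ.prodMap q.mkQ) ?_) ⟨?_, ?_⟩
  · rintro ⟨a, b⟩ ⟨ha, hb⟩
    have : p.mkQ a = 0 := (Submodule.Quotient.mk_eq_zero p).2 ha
    have hb' : q.mkQ b = 0 := (Submodule.Quotient.mk_eq_zero q).2 hb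
    exact Prod.ext this hb'
  · intro x y hxy
    obtain ⟨⟨a, b⟩, rfl⟩ := Submodule.Quotient.mk_surjective _ x
    obtain ⟨⟨c, d⟩, rfl⟩ := Submodule.Quotient.mk_surjective _ y
    rw [Submodule.liftQ_apply, Submodule.liftQ_apply] at hxy
    have h1 : p.mkQ a = p.mkQ c := congrArg Prod.fst hxy
    have h2 : q.mkQ b = q.mkQ d := congrArg Prod.snd hxy
    rw [Submodule.Quotient.eq]
    constructor
    · exact (Submodule.Quotient.eq p).1 h1
    · exact (Submodule.Quotient.eq q).1 h2
  · intro z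
    obtain ⟨a, ha⟩ := Submodule.Quotient.mk_surjective p z.1
    obtain ⟨b, hb⟩ := Submodule.Quotient.mk_surjective q z.2
    exact ⟨Submodule.Quotient.mk (a, b), by
      rw [Submodule.liftQ_apply]; exact Prod.ext ha hb⟩

theorem extP_prod {M N : ModuleCat.{max u v} (Lam F I)} (hM : extP F I M) (hN : extP F I N) :
    extP F I (ModuleCat.of (Lam F I) (↑M × ↑N)) := by
  obtain ⟨M', hM1, hM2⟩ := hM
  obtain ⟨N', hN1, hN2⟩ := hN
  refine ⟨M'.prod N', ?_, ?_⟩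
  · exact isFinSumTriv_congr F I (submoduleProdEquiv F I M' N').symm
      (isFinSumTriv_prod F I hM1 hN1)
  · exact isFinSumTriv_congr F I (prodQuotEquiv F I M' N').symm
      (isFinSumTriv_prod F I hM2 hN2)

theorem extP_of_subsingleton (M : ModuleCat.{max u v} (Lam F I)) (h : Subsingleton ↑M) :
    extP F I M := by
  have hq : Subsingleton (↑M ⧸ (⊥ : Submodule (Lam F I) ↑M)) := by
    constructor
    intro a b
    obtain ⟨x, rfl⟩ := Submodule.Quotient.mk_surjective _ a
    obtain ⟨y, rfl⟩ := Submodule.Quotient.mk_surjective _ b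
    exact congrArg _ (Subsingleton.elim x y)
  exact ⟨⊥, isFinSumTriv_of_subsingleton F I inferInstance, isFinSumTriv_of_subsingleton F I hq⟩

/-! ### Closure under (co)limits -/

/-- Closure of a property under limits of shape `J`. -/
def ClosedUnderLimitsOfShape {C : Type*} [Category C] (J : Type*) [Category J] (P : C → Prop) :
    Prop :=
  ∀ ⦃K : J ⥤ C⦄ ⦃c : Cone K⦄ (_hc : IsLimit c), (∀ j, P (K.obj j)) → P c.pt

/-- Closure of a property under colimits of shape `J`. -/
def ClosedUnderColimitsOfShape {C : Type*} [Category C] (J : Type*) [Category J] (P : C → Prop) :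
    Prop :=
  ∀ ⦃K : J ⥤ C⦄ ⦃c : Cocone K⦄ (_hc : IsColimit c), (∀ j, P (K.obj j)) → P c.pt

theorem closed_term : ClosedUnderLimitsOfShape (Discrete PEmpty.{1}) (extP F I) := by
  intro K c hc _
  refine extP_of_subsingleton F I c.pt ?_
  have h : (𝟙 c.pt : c.pt ⟶ c.pt) = 0 := hc.hom_ext (fun j => j.as.elim)
  constructor
  intro a b
  calc a = (𝟙 c.pt : c.pt ⟶ c.pt) a := rfl
    _ = (0 : c.pt ⟶ c.pt) a := by rw [h]
    _ = (0 : c.pt ⟶ c.pt) b := rfl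
    _ = (𝟙 c.pt : c.pt ⟶ c.pt) b := by rw [h]
    _ = b := rfl

theorem closed_prod : ClosedUnderLimitsOfShape (Discrete WalkingPair) (extP F I) := by
  intro K c hc hK
  let φ : ↑c.pt →ₗ[Lam F I] ↑(K.obj ⟨WalkingPair.left⟩) × ↑(K.obj ⟨WalkingPair.right⟩) :=
    LinearMap.prod (c.π.app ⟨WalkingPair.left⟩).hom (c.π.app ⟨WalkingPair.right⟩).hom
  have hinj : Function.Injective φ := by
    intro x y hxy
    let u0 : Lam F I →ₗ[Lam F I] ↑c.pt :=
      { toFun := fun r => r • (x - y)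
        map_add' := fun a b => add_smul a b _
        map_smul' := fun a b => mul_smul a b _ }
    let u : ModuleCat.of (Lam F I) (Lam F I) ⟶ c.pt := ModuleCat.ofHom u0
    have hu : u = 0 := by
      apply hc.hom_ext
      rintro ⟨j⟩
      rw [zero_comp]
      apply ModuleCat.hom_ext
      apply LinearMap.ext
      intro r
      show c.π.app ⟨j⟩ (r • (x - y)) = 0
      have hz : c.π.app ⟨j⟩ (x - y) = 0 := by
        have h1 : c.π.app ⟨WalkingPair.left⟩ x = c.π.app ⟨WalkingPair.left⟩ y :=
          congrArg Prod.fst hxy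
        have h2 : c.π.app ⟨WalkingPair.right⟩ x = c.π.app ⟨WalkingPair.right⟩ y :=
          congrArg Prod.snd hxy
        cases j
        · rw [map_sub, h1, sub_self]
        · rw [map_sub, h2, sub_self]
      rw [map_smul, hz, smul_zero]
    have h1 : u (1 : Lam F I) = 0 := by rw [hu]; rfl
    have h2 : x - y = 0 := by
      have : (1 : Lam F I) • (x - y) = 0 := h1
      rwa [one_smul] at this
    exact sub_eq_zero.1 h2
  exact extP_of_injective F I
    (extP_prod F I (hK ⟨WalkingPair.left⟩) (hK ⟨WalkingPair.right⟩)) φ hinj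

theorem closed_ker : ClosedUnderLimitsOfShape WalkingParallelPair (extP F I) := by
  intro K c hc hK
  have hinj : Function.Injective (c.π.app WalkingParallelPair.zero) := by
    intro x y hxy
    let u0 : Lam F I →ₗ[Lam F I] ↑c.pt :=
      { toFun := fun r => r • (x - y)
        map_add' := fun a b => add_smul a b _
        map_smul' := fun a b => mul_smul a b _ }
    let u : ModuleCat.of (Lam F I) (Lam F I) ⟶ c.pt := ModuleCat.ofHom u0
    have hu : u = 0 := by
      apply hc.hom_ext
      intro j
      rw [zero_comp]
      apply ModuleCat.hom_ext
      apply LinearMap.ext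
      intro r
      have hz : c.π.app j (x - y) = 0 := by
        cases j
        · rw [map_sub, hxy, sub_self]
        · rw [← c.w WalkingParallelPairHom.left]
          show (K.map WalkingParallelPairHom.left)
            (c.π.app WalkingParallelPair.zero (x - y)) = 0
          rw [map_sub, hxy, sub_self, map_zero]
      show c.π.app j (r • (x - y)) = 0
      rw [map_smul, hz, smul_zero]
    have h1 : u (1 : Lam F I) = 0 := by rw [hu]; rfl
    have h2 : x - y = 0 := by
      have : (1 : Lam F I) • (x - y) = 0 := h1
      rwa [one_smul] at this
    exact sub_eq_zero.1 h2
  exact extP_of_injective F I (hK WalkingParallelPair.zero)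
    (c.π.app WalkingParallelPair.zero).hom hinj

theorem closed_coker : ClosedUnderColimitsOfShape WalkingParallelPair (extP F I) := by
  intro K c hc hK
  have hsurj : Function.Surjective (c.ι.app WalkingParallelPair.one) := by
    set φ := c.ι.app WalkingParallelPair.one with hφ
    let Q : ModuleCat.{max u v} (Lam F I) :=
      ModuleCat.of (Lam F I) (↑c.pt ⧸ LinearMap.range φ.hom)
    let qm : c.pt ⟶ Q := ModuleCat.ofHom (LinearMap.range φ.hom).mkQ
    have hq : qm = 0 := by
      apply hc.hom_ext
      intro j
      apply ModuleCat.hom_ext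
      apply LinearMap.ext
      intro x
      have key : ∀ z : ↑(K.obj WalkingParallelPair.one), qm (φ z) = 0 := by
        intro z
        exact (Submodule.Quotient.mk_eq_zero _).2 ⟨z, rfl⟩
      cases j
      · show qm (c.ι.app WalkingParallelPair.zero x) = _
        rw [← c.w WalkingParallelPairHom.left]
        show qm (φ ((K.map WalkingParallelPairHom.left) x)) = _
        rw [key]
        rfl
      · show qm (φ x) = _
        rw [key]
        rfl
    intro y
    have : qm y = 0 := by rw [hq]; rfl
    obtain ⟨z, hz⟩ := (Submodule.Quotient.mk_eq_zero _).1 this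
    exact ⟨z, hz⟩
  exact extP_of_surjective F I (hK WalkingParallelPair.one)
    (c.ι.app WalkingParallelPair.one).hom hsurj

noncomputable instance : Preadditive (CatA F I) :=
  inferInstanceAs (Preadditive (ObjectProperty.FullSubcategory (extP F I)))

/-! ### Monos and epis in `CatA` -/

theorem catA_mono_inj {X Y : CatA F I} (f : X ⟶ Y) [Mono f] :
    Function.Injective ((ObjectProperty.ι (extP F I)).map f) := by
  let f' : ↑X.obj →ₗ[Lam F I] ↑Y.obj := ((ObjectProperty.ι (extP F I)).map f).hom
  suffices hker : LinearMap.ker f' = ⊥ from LinearMap.ker_eq_bot.1 hker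
  set K := LinearMap.ker f' with hK
  let KA : CatA F I := ⟨ModuleCat.of (Lam F I) ↥K,
    extP_of_injective F I X.property K.subtype Subtype.coe_injective⟩
  let u0 : ↥K →ₗ[Lam F I] ↑X.obj := K.subtype
  let u : KA ⟶ X := ObjectProperty.homMk (ModuleCat.ofHom u0)
  have hcomp : u ≫ f = (0 : KA ⟶ X) ≫ f := by
    rw [zero_comp]
    apply ObjectProperty.hom_ext
    apply ModuleCat.hom_ext
    apply LinearMap.ext
    rintro ⟨x, hx⟩
    change f' x = _
    change _ = (0 : ↥K →ₗ[Lam F I] ↑Y.obj) ⟨x, hx⟩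
    show f' x = 0
    exact LinearMap.mem_ker.1 hx
  have hu : u = 0 := (cancel_mono f).1 hcomp
  have hu0 : u0 = 0 := by
    have h1 : (ObjectProperty.ι (extP F I)).map u = 0 := by
      rw [hu]; exact Functor.map_zero _ _ _
    exact congrArg ModuleCat.Hom.hom h1
  rw [Submodule.eq_bot_iff]
  intro x hx
  have : u0 ⟨x, hx⟩ = 0 := by rw [hu0]; rfl
  exact this

theorem catA_epi_surj {X Y : CatA F I} (f : X ⟶ Y) [Epi f] :
    Function.Surjective ((ObjectProperty.ι (extP F I)).map f) := by
  let f' : ↑X.obj →ₗ[Lam F I] ↑Y.obj := ((ObjectProperty.ι (extP F I)).map f).hom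
  suffices hrange : LinearMap.range f' = ⊤ from LinearMap.range_eq_top.1 hrange
  set R := LinearMap.range f' with hR
  let QA : CatA F I := ⟨ModuleCat.of (Lam F I) (↑Y.obj ⧸ R),
    extP_of_surjective F I Y.property R.mkQ (Submodule.Quotient.mk_surjective R)⟩
  let q0 : ↑Y.obj →ₗ[Lam F I] (↑Y.obj ⧸ R) := R.mkQ
  let q : Y ⟶ QA := ObjectProperty.homMk (ModuleCat.ofHom q0)
  have hcomp : f ≫ q = f ≫ (0 : Y ⟶ QA) := by
    rw [comp_zero]
    apply ObjectProperty.hom_ext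
    apply ModuleCat.hom_ext
    apply LinearMap.ext
    intro x
    show q0 (f' x) = 0
    exact (Submodule.Quotient.mk_eq_zero _).2 ⟨x, rfl⟩
  have hq : q = 0 := (cancel_epi f).1 hcomp
  have hq0 : q0 = 0 := by
    have h1 : (ObjectProperty.ι (extP F I)).map q = 0 := by
      rw [hq]; exact Functor.map_zero _ _ _
    exact congrArg ModuleCat.Hom.hom h1
  rw [eq_top_iff]
  intro y _
  have : q0 y = 0 := by rw [hq0]; rfl
  exact (Submodule.Quotient.mk_eq_zero _).1 this

/-! ### The abelian structure -/

noncomputable instance catAAbelian : Abelian (CatA F I) := by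
  haveI c1 : ObjectProperty.IsClosedUnderLimitsOfShape (extP F I) (Discrete PEmpty.{1}) :=
    ⟨fun _ ⟨p⟩ => closed_term F I p.isLimit p.prop_diag_obj⟩
  haveI c2 : ObjectProperty.IsClosedUnderLimitsOfShape (extP F I) (Discrete WalkingPair) :=
    ⟨fun _ ⟨p⟩ => closed_prod F I p.isLimit p.prop_diag_obj⟩
  haveI c4 : ObjectProperty.IsClosedUnderLimitsOfShape (extP F I) WalkingParallelPair :=
    ⟨fun _ ⟨p⟩ => closed_ker F I p.isLimit p.prop_diag_obj⟩
  haveI c5 : ObjectProperty.IsClosedUnderColimitsOfShape (extP F I) WalkingParallelPair :=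
    ⟨fun _ ⟨p⟩ => closed_coker F I p.isColimit p.prop_diag_obj⟩
  haveI h1 : HasTerminal (CatA F I) :=
    hasLimitsOfShape_of_closedUnderLimits _ _
  haveI h2 : HasBinaryProducts (CatA F I) :=
    hasLimitsOfShape_of_closedUnderLimits _ _
  haveI h3 : HasFiniteProducts (CatA F I) := hasFiniteProducts_of_has_binary_and_terminal
  haveI h4 : HasLimitsOfShape WalkingParallelPair (CatA F I) :=
    hasLimitsOfShape_of_closedUnderLimits _ _
  haveI h5 : HasColimitsOfShape WalkingParallelPair (CatA F I) :=
    hasColimitsOfShape_of_closedUnderColimits _ _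
  haveI h6 : HasKernels (CatA F I) := ⟨fun {X Y} f => inferInstance⟩
  haveI h7 : HasCokernels (CatA F I) := ⟨fun {X Y} f => inferInstance⟩
  haveI h8 : CreatesLimitsOfShape WalkingParallelPair
      (ObjectProperty.ι (extP F I)) :=
    createsLimitsOfShapeFullSubcategoryInclusion _ _
  haveI h9 : CreatesColimitsOfShape WalkingParallelPair
      (ObjectProperty.ι (extP F I)) :=
    createsColimitsOfShapeFullSubcategoryInclusion _ _
  haveI h10 : @Functor.PreservesZeroMorphisms (CatA F I) (inferInstance : Category (CatA F I))
      _ _ Preadditive.preadditiveHasZeroMorphisms _ (ObjectProperty.ι (extP F I)) :=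
    ⟨fun _ _ => rfl⟩
  haveI h11 : ReflectsLimitsOfShape WalkingParallelPair (ObjectProperty.ι (extP F I)) :=
    inferInstance
  haveI h12 : ReflectsColimitsOfShape WalkingParallelPair (ObjectProperty.ι (extP F I)) :=
    inferInstance
  haveI h13 : PreservesColimitsOfShape WalkingParallelPair (ObjectProperty.ι (extP F I)) :=
    inferInstance
  haveI h14 : PreservesLimitsOfShape WalkingParallelPair (ObjectProperty.ι (extP F I)) :=
    inferInstance
  exact
    { normalMonoOfMono := fun {X Y} f hf => by
        haveI : Mono ((ObjectProperty.ι (extP F I)).map f) := by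
          rw [ModuleCat.mono_iff_injective]
          exact catA_mono_inj F I f
        haveI : @PreservesColimit (CatA F I) _ _ _ _ _ (parallelPair f 0)
            (ObjectProperty.ι (extP F I)) :=
          PreservesColimitsOfShape.preservesColimit (self := h13)
        exact ⟨
          { Z := cokernel f
            g := cokernel.π f
            w := cokernel.condition f
            isLimit := (ReflectsLimit.reflects (F := ObjectProperty.ι (extP F I))
              (self := ReflectsLimitsOfShape.reflectsLimit (self := h11))
              (Abelian.isLimitMapConeOfKernelForkOfι f
                (ObjectProperty.ι (extP F I)))).some }⟩
      normalEpiOfEpi := fun {X Y} f hf => by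
        haveI : Epi ((ObjectProperty.ι (extP F I)).map f) := by
          rw [ModuleCat.epi_iff_surjective]
          exact catA_epi_surj F I f
        haveI : @PreservesLimit (CatA F I) _ _ _ _ _ (parallelPair f 0)
            (ObjectProperty.ι (extP F I)) :=
          PreservesLimitsOfShape.preservesLimit (self := h14)
        exact ⟨
          { W := kernel f
            g := kernel.ι f
            w := kernel.condition f
            isColimit := (ReflectsColimit.reflects (F := ObjectProperty.ι (extP F I))
              (self := ReflectsColimitsOfShape.reflectsColimit (self := h12))
              (Abelian.isColimitMapCoconeOfCokernelCoforkOfπ f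
                (ObjectProperty.ι (extP F I)))).some }⟩ }

/-- Let `F` be a field, `I` a set of cardinality strictly larger than
that of every set in a Grothendieck universe `U` containing `F` (modelled by the
universe level `u` of `F`), and `Λ = F⟨I⟩` the free algebra on `I`. Then the category
`A` of `Λ`-modules which are extensions of a finite direct sum of copies of the
trivial module `F` by a finite direct sum of copies of `F` is an abelian category. -/
theorem statement5
    (hbig : ∀ α : Type u, Cardinal.lift.{v} (Cardinal.mk α) <
      Cardinal.lift.{u} (Cardinal.mk I)) :
    Nonempty (Abelian (CatA F I)) := by
  exact ⟨catAAbelian F I⟩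

end PaperStmt
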